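/- Let γ = (γ_k) and β = (β_k) be sequences in the open unit disc with 0 < inf_k min(|γ_k|,|β_k|) and sup_k max(|γ_k|,|β_k|) < 1. If the difference of diagonal operators D₁(γ) − D₁(β) is compact, then D₂(γ) − D₂(β) is compact and the difference of GGT operators H(γ) − H(β) is compact. -/

import Mathlib

noncomputable section

open Filter Metric Set
open scoped ENNReal

/-- `ℓ²(ℤ)`. -/
abbrev l2Z : Type := lp (fun _ : ℤ => ℂ) 2

private lemma diag_apply_single (d : ℤ → ℂ) (D : l2Z →L[ℂ] l2Z)
    (hD : ∀ (φ : l2Z) (k : ℤ), (D φ) k = d k * φ k) (k : ℤ) :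
    D (lp.single 2 k 1) = lp.single 2 k (d k) := by
  apply lp.ext
  funext j
  rw [hD]
  by_cases h : j = k
  · subst h; rw [lp.single_apply_self, lp.single_apply_self, mul_one]
  · rw [lp.single_apply_ne _ _ _ h, lp.single_apply_ne _ _ _ h, mul_zero]

/-- A compact "diagonal" (pointwise multiplication) operator has entries tending to `0`. -/
private lemma diag_tendsto (d : ℤ → ℂ) (D : l2Z →L[ℂ] l2Z)
    (hD : ∀ (φ : l2Z) (k : ℤ), (D φ) k = d k * φ k)
    (hc : IsCompactOperator ⇑D) : Tendsto d cofinite (nhds 0) := by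
  rw [Metric.tendsto_nhds]
  intro ε hε
  rw [Filter.eventually_cofinite]
  by_contra hinf
  replace hinf : {x : ℤ | ¬dist (d x) 0 < ε}.Infinite := hinf
  obtain ⟨K, hK, hDK⟩ := hc.image_closedBall_subset_compact 1
  obtain ⟨t, htf, htc⟩ := (Metric.totallyBounded_iff.mp hK.totallyBounded) (ε/2) (by linarith)
  have hmem : ∀ k : ℤ, D (lp.single 2 k 1) ∈ K := by
    intro k
    apply hDK
    refine ⟨lp.single 2 k 1, ?_, rfl⟩
    rw [Metric.mem_closedBall, dist_zero_right]
    have := lp.norm_single (p := (2:ℝ≥0∞)) (E := fun _ : ℤ => ℂ) (by norm_num) k (1:ℂ)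
    simp only [norm_one] at this
    rw [this]
  have hchoice : ∀ k : ℤ, ∃ y ∈ t, D (lp.single 2 k 1) ∈ ball y (ε/2) := by
    intro k
    have := htc (hmem k)
    simpa using this
  choose y hyt hyb using hchoice
  obtain ⟨k, hk, j, hj, hkj, hyy⟩ :=
    hinf.exists_ne_map_eq_of_mapsTo (f := y) (fun k _ => hyt k) htf
  have hdist : dist (D (lp.single 2 k 1)) (D (lp.single 2 j 1)) < ε := by
    have h1 : dist (D (lp.single 2 k 1)) (y j) < ε/2 := hyy ▸ mem_ball.mp (hyb k)
    have h2 : dist (y j) (D (lp.single 2 j 1)) < ε/2 := by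
      rw [dist_comm]; exact mem_ball.mp (hyb j)
    linarith [dist_triangle (D (lp.single 2 k 1)) (y j) (D (lp.single 2 j 1))]
  have hlow : ε ≤ dist (D (lp.single 2 k 1)) (D (lp.single 2 j 1)) := by
    rw [dist_eq_norm]
    have h1 : ‖(D (lp.single 2 k 1) - D (lp.single 2 j 1) : l2Z) k‖
        ≤ ‖(D (lp.single 2 k 1) - D (lp.single 2 j 1) : l2Z)‖ :=
      lp.norm_apply_le_norm (by norm_num) _ k
    refine le_trans ?_ h1
    rw [lp.coeFn_sub, Pi.sub_apply, diag_apply_single d D hD, diag_apply_single d D hD,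
      lp.single_apply_self, lp.single_apply_ne _ _ _ hkj, sub_zero]
    have := hk
    simp only [Set.mem_setOf_eq, not_lt, dist_zero_right] at this
    exact this
  linarith

/-- A "diagonal" (pointwise multiplication) operator whose entries tend to `0` is compact. -/
private lemma diag_isCompact (d : ℤ → ℂ) (D : l2Z →L[ℂ] l2Z)
    (hD : ∀ (φ : l2Z) (k : ℤ), (D φ) k = d k * φ k)
    (hd : Tendsto d cofinite (nhds 0)) : IsCompactOperator ⇑D := by
  have hq : (0:ℝ) < (2:ℝ≥0∞).toReal := by norm_num
  have key : TotallyBounded (⇑D '' closedBall 0 1) := by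
    rw [Metric.totallyBounded_iff]
    intro ε hε
    have hfin : {k : ℤ | ¬ dist (d k) 0 < ε/4}.Finite :=
      Filter.eventually_cofinite.mp ((Metric.tendsto_nhds.mp hd) (ε/4) (by linarith))
    set Fs : Finset ℤ := hfin.toFinset with hFs
    set M : ℝ := ‖D‖ with hM
    set g : (ℤ → ℂ) → l2Z := fun c => ∑ k ∈ Fs, c k • lp.single 2 k 1 with hg
    have hgc : Continuous g := by
      apply continuous_finset_sum
      intro k _
      exact (continuous_apply k).smul continuous_const
    have hU : IsCompact (g '' (Set.univ.pi (fun _ => closedBall (0:ℂ) M))) :=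
      (isCompact_univ_pi (fun _ => isCompact_closedBall _ _)).image hgc
    obtain ⟨t, htf, htc⟩ := (Metric.totallyBounded_iff.mp hU.totallyBounded) (ε/2) (by linarith)
    refine ⟨t, htf, ?_⟩
    rintro x ⟨φ, hφ, rfl⟩
    rw [Metric.mem_closedBall, dist_zero_right] at hφ
    set c : ℤ → ℂ := fun k => d k * φ k with hc
    have hcK0 : c ∈ Set.univ.pi (fun _ : ℤ => closedBall (0:ℂ) M) := by
      intro k _
      rw [mem_closedBall, dist_zero_right]
      calc ‖c k‖ = ‖(D φ) k‖ := by rw [hD]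
        _ ≤ ‖D φ‖ := lp.norm_apply_le_norm (by norm_num) _ k
        _ ≤ ‖D‖ * ‖φ‖ := D.le_opNorm φ
        _ ≤ M := by nlinarith [norm_nonneg D]
    have hgcj : ∀ j : ℤ, (g c) j = if j ∈ Fs then d j * φ j else 0 := by
      intro j
      have h1 : (↑(∑ k ∈ Fs, c k • lp.single 2 k 1) : ∀ _ : ℤ, ℂ) j
          = ∑ k ∈ Fs, (c k • lp.single 2 k (1:ℂ) : l2Z) j := by
        rw [lp.coeFn_sum, Finset.sum_apply]
      rw [hg]; rw [h1]
      by_cases hj : j ∈ Fs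
      · rw [if_pos hj, Finset.sum_eq_single j]
        · rw [lp.coeFn_smul, Pi.smul_apply, lp.single_apply_self, smul_eq_mul, mul_one]
        · intro k _ hkj
          rw [lp.coeFn_smul, Pi.smul_apply, lp.single_apply_ne _ _ _ (Ne.symm hkj), smul_zero]
        · intro hj'; exact absurd hj hj'
      · rw [if_neg hj]
        apply Finset.sum_eq_zero
        intro k hk
        have hjk : j ≠ k := fun h => hj (h ▸ hk)
        rw [lp.coeFn_smul, Pi.smul_apply, lp.single_apply_ne _ _ _ hjk, smul_zero]
    have htail : ‖D φ - g c‖ ≤ ε/4 := by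
      apply lp.norm_le_of_forall_sum_le hq (by linarith)
      intro s
      have hterm : ∀ i ∈ s, ‖(D φ - g c : l2Z) i‖ ^ (2:ℝ≥0∞).toReal
          ≤ (ε/4) ^ (2:ℝ≥0∞).toReal * ‖φ i‖ ^ (2:ℝ≥0∞).toReal := by
        intro i _
        have hent : (D φ - g c : l2Z) i = if i ∈ Fs then 0 else d i * φ i := by
          rw [lp.coeFn_sub, Pi.sub_apply, hD, hgcj]
          by_cases hi : i ∈ Fs
          · rw [if_pos hi, if_pos hi, sub_self]
          · rw [if_neg hi, if_neg hi, sub_zero]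
        rw [hent]
        by_cases hi : i ∈ Fs
        · rw [if_pos hi]
          simp only [norm_zero]
          rw [Real.zero_rpow (by norm_num)]
          positivity
        · rw [if_neg hi]
          have hdi : ‖d i‖ ≤ ε/4 := by
            have : i ∉ {k : ℤ | ¬ dist (d k) 0 < ε/4} := by
              intro h; exact hi (hfin.mem_toFinset.mpr h)
            simp only [Set.mem_setOf_eq, not_not, dist_zero_right] at this
            linarith
          calc ‖d i * φ i‖ ^ (2:ℝ≥0∞).toReal
              ≤ (ε/4 * ‖φ i‖) ^ (2:ℝ≥0∞).toReal := by
                apply Real.rpow_le_rpow (norm_nonneg _) ?_ (le_of_lt hq)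
                rw [norm_mul]
                exact mul_le_mul_of_nonneg_right hdi (norm_nonneg _)
            _ = (ε/4) ^ (2:ℝ≥0∞).toReal * ‖φ i‖ ^ (2:ℝ≥0∞).toReal :=
                Real.mul_rpow (by linarith) (norm_nonneg _)
      calc ∑ i ∈ s, ‖(D φ - g c : l2Z) i‖ ^ (2:ℝ≥0∞).toReal
          ≤ ∑ i ∈ s, (ε/4) ^ (2:ℝ≥0∞).toReal * ‖φ i‖ ^ (2:ℝ≥0∞).toReal :=
            Finset.sum_le_sum hterm
        _ = (ε/4) ^ (2:ℝ≥0∞).toReal * ∑ i ∈ s, ‖φ i‖ ^ (2:ℝ≥0∞).toReal := by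
            rw [Finset.mul_sum]
        _ ≤ (ε/4) ^ (2:ℝ≥0∞).toReal * ‖φ‖ ^ (2:ℝ≥0∞).toReal := by
            apply mul_le_mul_of_nonneg_left (lp.sum_rpow_le_norm_rpow hq φ s)
            positivity
        _ ≤ (ε/4) ^ (2:ℝ≥0∞).toReal * 1 := by
            apply mul_le_mul_of_nonneg_left ?_ (by positivity)
            exact Real.rpow_le_one (norm_nonneg _) hφ (le_of_lt hq)
        _ = (ε/4) ^ (2:ℝ≥0∞).toReal := mul_one _
    obtain ⟨y, hy⟩ := Set.mem_iUnion₂.mp (htc ⟨c, hcK0, rfl⟩)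
    obtain ⟨hyt, hyb⟩ := hy
    rw [Set.mem_iUnion₂]
    refine ⟨y, hyt, ?_⟩
    rw [mem_ball]
    calc dist (D φ) y ≤ dist (D φ) (g c) + dist (g c) y := dist_triangle _ _ _
      _ < ε/4 + ε/2 := by
          apply add_lt_add_of_le_of_lt
          · rw [dist_eq_norm]; exact htail
          · exact mem_ball.mp hyb
      _ < ε := by linarith
  refine ⟨closure (⇑D '' closedBall 0 1),
    TotallyBounded.isCompact_of_isClosed key.closure isClosed_closure, ?_⟩
  apply Filter.mem_of_superset (Metric.closedBall_mem_nhds (0:l2Z) one_pos)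
  intro φ hφ
  exact subset_closure ⟨φ, hφ, rfl⟩

/-- The adjoint of a diagonal operator is the conjugate diagonal operator. -/
private lemma star_diag_apply (d : ℤ → ℂ) (D : l2Z →L[ℂ] l2Z)
    (hD : ∀ (φ : l2Z) (k : ℤ), (D φ) k = d k * φ k) (φ : l2Z) (k : ℤ) :
    ((star D) φ) k = (starRingEnd ℂ) (d k) * φ k := by
  have h1 : ∀ (ψ : l2Z) (j : ℤ), (inner ℂ (lp.single 2 j 1 : l2Z) ψ : ℂ) = ψ j := by
    intro ψ j
    rw [lp.inner_single_left, RCLike.inner_apply, map_one, mul_one]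
  calc ((star D) φ) k = inner ℂ (lp.single 2 k 1 : l2Z) ((star D) φ) := (h1 _ k).symm
    _ = inner ℂ (D (lp.single 2 k 1)) φ := by
        rw [ContinuousLinearMap.star_eq_adjoint]
        exact ContinuousLinearMap.adjoint_inner_right D _ _
    _ = inner ℂ (lp.single 2 k (d k) : l2Z) φ := by rw [diag_apply_single d D hD]
    _ = (starRingEnd ℂ) (d k) * φ k := by
        rw [lp.inner_single_left, RCLike.inner_apply, mul_comm]

private lemma op_sub_compact {X Y : l2Z →L[ℂ] l2Z} (hX : IsCompactOperator ⇑X)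
    (hY : IsCompactOperator ⇑Y) : IsCompactOperator ⇑(X - Y) := by
  rw [ContinuousLinearMap.coe_sub']
  exact hX.sub hY

private lemma op_add_compact {X Y : l2Z →L[ℂ] l2Z} (hX : IsCompactOperator ⇑X)
    (hY : IsCompactOperator ⇑Y) : IsCompactOperator ⇑(X + Y) := by
  rw [ContinuousLinearMap.coe_add']
  exact hX.add hY

private lemma compact_mul_mul {K : l2Z →L[ℂ] l2Z} (A B : l2Z →L[ℂ] l2Z)
    (hK : IsCompactOperator ⇑K) : IsCompactOperator ⇑(A * K * B) := by
  have h : ⇑(A * K * B) = ⇑A ∘ (⇑K ∘ ⇑B) := by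
    funext x
    simp [ContinuousLinearMap.mul_apply, Function.comp]
  rw [h]
  exact (hK.comp_clm B).clm_comp A

private lemma sqrt_diff_le' {B : ℝ} (hB : B < 1) (x y : ℂ) (hx : ‖x‖ ≤ B) (hy : ‖y‖ ≤ B) :
    |Real.sqrt (1 - ‖x‖^2) - Real.sqrt (1 - ‖y‖^2)| ≤ ‖x - y‖ / Real.sqrt (1 - B^2) := by
  have hB0 : 0 ≤ B := le_trans (norm_nonneg x) hx
  have hB2 : B^2 < 1 := by nlinarith
  set s := Real.sqrt (1 - B^2) with hs
  have hs0 : 0 < s := Real.sqrt_pos.mpr (by linarith)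
  set a := Real.sqrt (1 - ‖x‖^2) with hadef
  set c := Real.sqrt (1 - ‖y‖^2) with hcdef
  have ha : s ≤ a := Real.sqrt_le_sqrt (by nlinarith [norm_nonneg x])
  have hc : s ≤ c := Real.sqrt_le_sqrt (by nlinarith [norm_nonneg y])
  have ha2 : a^2 = 1 - ‖x‖^2 := Real.sq_sqrt (by nlinarith [norm_nonneg x])
  have hc2 : c^2 = 1 - ‖y‖^2 := Real.sq_sqrt (by nlinarith [norm_nonneg y])
  have hnd1 : ‖x‖ - ‖y‖ ≤ ‖x - y‖ := norm_sub_norm_le x y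
  have hnd2 : ‖y‖ - ‖x‖ ≤ ‖x - y‖ := by
    have := norm_sub_norm_le y x
    rwa [norm_sub_rev] at this
  have hxn : 0 ≤ ‖x‖ := norm_nonneg x
  have hyn : 0 ≤ ‖y‖ := norm_nonneg y
  have hxy0 : 0 ≤ ‖x - y‖ := norm_nonneg _
  rw [abs_sub_le_iff]
  constructor
  · rw [le_div_iff₀ hs0]
    rcases le_or_gt a c with h | h
    · nlinarith
    · nlinarith [mul_le_mul_of_nonneg_left hnd2 (by linarith : (0:ℝ) ≤ ‖y‖ + ‖x‖),
        mul_le_mul_of_nonneg_left (show 2*s ≤ a + c by linarith)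
          (le_of_lt (sub_pos.mpr h)),
        mul_nonneg (by linarith : (0:ℝ) ≤ 2 - (‖y‖ + ‖x‖)) hxy0]
  · rw [le_div_iff₀ hs0]
    rcases le_or_gt c a with h | h
    · nlinarith
    · nlinarith [mul_le_mul_of_nonneg_left hnd1 (by linarith : (0:ℝ) ≤ ‖x‖ + ‖y‖),
        mul_le_mul_of_nonneg_left (show 2*s ≤ c + a by linarith)
          (le_of_lt (sub_pos.mpr h)),
        mul_nonneg (by linarith : (0:ℝ) ≤ 2 - (‖x‖ + ‖y‖)) hxy0]

/-- Lemma 3.9 ("ggt0"): for two Verblunsky-type sequences `γ, β` in the open unit disc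
with moduli uniformly bounded away from `0` and `1`, if `D₁(γ) − D₁(β)` is compact then
so are `D₂(γ) − D₂(β)` and `H(γ) − H(β)`, where
`H(γ) = T*D₂(γ) − T*D₁(γ)T(I − D₂(γ)T)⁻¹D₁(γ)*` is the GGT operator. -/
theorem stmt5 (γ β : ℤ → ℂ)
    (hlow : ∃ b > (0 : ℝ), ∀ k : ℤ, b ≤ ‖γ k‖ ∧ b ≤ ‖β k‖)
    (hupp : ∃ B < (1 : ℝ), ∀ k : ℤ, ‖γ k‖ ≤ B ∧ ‖β k‖ ≤ B)
    -- the shift T and the diagonal operators D₁, D₂ for γ and β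
    (T D1γ D1β D2γ D2β Rγ Rβ : l2Z →L[ℂ] l2Z)
    (hT : ∀ (φ : l2Z) (k : ℤ), (T φ) k = φ (k - 1))
    (hD1γ : ∀ (φ : l2Z) (k : ℤ), (D1γ φ) k = γ k * φ k)
    (hD1β : ∀ (φ : l2Z) (k : ℤ), (D1β φ) k = β k * φ k)
    (hD2γ : ∀ (φ : l2Z) (k : ℤ), (D2γ φ) k = (Real.sqrt (1 - ‖γ k‖ ^ 2) : ℂ) * φ k)
    (hD2β : ∀ (φ : l2Z) (k : ℤ), (D2β φ) k = (Real.sqrt (1 - ‖β k‖ ^ 2) : ℂ) * φ k)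
    -- Rγ, Rβ are the inverses of I − D₂(γ)T and I − D₂(β)T
    (hRγ : Rγ * (1 - D2γ * T) = 1 ∧ (1 - D2γ * T) * Rγ = 1)
    (hRβ : Rβ * (1 - D2β * T) = 1 ∧ (1 - D2β * T) * Rβ = 1)
    -- hypothesis: D₁(γ) − D₁(β) is compact
    (hcomp : IsCompactOperator ⇑(D1γ - D1β)) :
    IsCompactOperator ⇑(D2γ - D2β) ∧
    IsCompactOperator ⇑((star T * D2γ - star T * D1γ * T * Rγ * star D1γ) -
      (star T * D2β - star T * D1β * T * Rβ * star D1β)) := by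
  obtain ⟨B, hB1, hBk⟩ := hupp
  have hs0 : 0 < Real.sqrt (1 - B^2) := by
    apply Real.sqrt_pos.mpr
    have hB0 : 0 ≤ B := le_trans (norm_nonneg (γ 0)) (hBk 0).1
    nlinarith
  -- entries of D1γ - D1β tend to zero
  have hsubD1 : ∀ (φ : l2Z) (k : ℤ), ((D1γ - D1β) φ) k = (γ k - β k) * φ k := by
    intro φ k
    rw [ContinuousLinearMap.sub_apply, lp.coeFn_sub, Pi.sub_apply, hD1γ, hD1β]
    ring
  have htend : Tendsto (fun k => γ k - β k) cofinite (nhds 0) :=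
    diag_tendsto _ (D1γ - D1β) hsubD1 hcomp
  have htendn : Tendsto (fun k => ‖γ k - β k‖) cofinite (nhds 0) := by
    have := htend.norm
    simpa using this
  -- part 1 : D2γ - D2β is compact
  have hsubD2 : ∀ (φ : l2Z) (k : ℤ),
      ((D2γ - D2β) φ) k
        = ((Real.sqrt (1 - ‖γ k‖ ^ 2) - Real.sqrt (1 - ‖β k‖ ^ 2) : ℝ) : ℂ) * φ k := by
    intro φ k
    rw [ContinuousLinearMap.sub_apply, lp.coeFn_sub, Pi.sub_apply, hD2γ, hD2β]
    push_cast
    ring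
  have htendδ : Tendsto
      (fun k => ((Real.sqrt (1 - ‖γ k‖ ^ 2) - Real.sqrt (1 - ‖β k‖ ^ 2) : ℝ) : ℂ))
      cofinite (nhds 0) := by
    rw [tendsto_zero_iff_norm_tendsto_zero]
    apply squeeze_zero (fun k => norm_nonneg _)
      (g := fun k => ‖γ k - β k‖ / Real.sqrt (1 - B^2))
    · intro k
      rw [Complex.norm_real]
      exact sqrt_diff_le' hB1 (γ k) (β k) (hBk k).1 (hBk k).2
    · have := htendn.div_const (Real.sqrt (1 - B^2))
      simpa using this
  have hK1 : IsCompactOperator ⇑(D2γ - D2β) :=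
    diag_isCompact _ (D2γ - D2β) hsubD2 htendδ
  refine ⟨hK1, ?_⟩
  -- entries of star D1γ - star D1β tend to zero, so it is compact
  have hsubS : ∀ (φ : l2Z) (k : ℤ),
      ((star D1γ - star D1β) φ) k
        = ((starRingEnd ℂ) (γ k) - (starRingEnd ℂ) (β k)) * φ k := by
    intro φ k
    rw [ContinuousLinearMap.sub_apply, lp.coeFn_sub, Pi.sub_apply,
      star_diag_apply γ D1γ hD1γ, star_diag_apply β D1β hD1β]
    ring
  have htendS : Tendsto (fun k => (starRingEnd ℂ) (γ k) - (starRingEnd ℂ) (β k))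
      cofinite (nhds 0) := by
    have h1 : (fun k => (starRingEnd ℂ) (γ k) - (starRingEnd ℂ) (β k))
        = fun k => (starRingEnd ℂ) (γ k - β k) := by
      funext k; rw [map_sub]
    rw [h1, tendsto_zero_iff_norm_tendsto_zero]
    have h2 : (fun k => ‖(starRingEnd ℂ) (γ k - β k)‖) = fun k => ‖γ k - β k‖ := by
      funext k; exact RCLike.norm_conj _
    rw [h2]
    exact htendn
  have hKs : IsCompactOperator ⇑(star D1γ - star D1β) :=
    diag_isCompact _ (star D1γ - star D1β) hsubS htendS
  -- resolvent difference identity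
  have Rdiff : Rγ - Rβ = Rγ * (D2γ - D2β) * (T * Rβ) := by
    have h1 : Rγ * ((1 - D2β * T) * Rβ) = Rγ := by rw [hRβ.2, mul_one]
    have h2 : (Rγ * (1 - D2γ * T)) * Rβ = Rβ := by rw [hRγ.1, one_mul]
    calc Rγ - Rβ = Rγ * ((1 - D2β * T) * Rβ) - (Rγ * (1 - D2γ * T)) * Rβ := by
          rw [h1, h2]
      _ = Rγ * (D2γ - D2β) * (T * Rβ) := by noncomm_ring
  -- main algebraic identity
  have step1 : (star T * D2γ - star T * D1γ * T * Rγ * star D1γ) -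
      (star T * D2β - star T * D1β * T * Rβ * star D1β)
      = star T * (D2γ - D2β) * 1
        - (star T * (D1γ - D1β) * (T * Rγ * star D1γ)
          + (star T * D1β * T) * (Rγ - Rβ) * star D1γ
          + (star T * D1β * T * Rβ) * (star D1γ - star D1β) * 1) := by
    noncomm_ring
  rw [step1, Rdiff]
  have hmid : IsCompactOperator ⇑((star T * D1β * T) * (Rγ * (D2γ - D2β) * (T * Rβ)) * star D1γ) :=
    compact_mul_mul _ _ (compact_mul_mul Rγ (T * Rβ) hK1)
  apply op_sub_compact (compact_mul_mul (star T) 1 hK1)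
  apply op_add_compact
  apply op_add_compact
  · exact compact_mul_mul (star T) (T * Rγ * star D1γ) hcomp
  · exact hmid
  · exact compact_mul_mul (star T * D1β * T * Rβ) 1 hKs
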